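/- Let ρ be a total weakly outer-continuous size function on a locally compact topological space E. Then E is locally bounded with respect to the bornology of totally ρ-bounded subsets: for every x and every open G containing x, there is a neighborhood U of x with U ⊆ G and ρ°(U) = 0. -/

import Mathlib

open scoped ENNReal

/-- A bornology on `E`, as a collection of "bounded" sets. -/
def IsBornology {E : Type*} (B : Set (Set E)) : Prop :=
  (∀ x : E, ∃ b ∈ B, x ∈ b) ∧
  (∀ b ∈ B, ∀ b' ∈ B, b ∪ b' ∈ B) ∧
  (∀ b b' : Set E, b ⊆ b' → b' ∈ B → b ∈ B)

/-- `ρ` is a size function. -/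
def IsSizeFunction {E : Type*} (ρ : Set E → ℝ≥0∞) : Prop :=
  ρ ∅ = 0 ∧ (∀ x : E, ρ {x} < ⊤) ∧ (∀ A A' : Set E, A ⊆ A' → ρ A ≤ ρ A')

/-- The monk of a size function. -/
noncomputable def monk {E : Type*} (ρ : Set E → ℝ≥0∞) (A : Set E) : ℝ≥0∞ :=
  sInf {t : ℝ≥0∞ | 0 < t ∧ ∃ S : Finset (Set E), (A ⊆ ⋃ s ∈ S, s) ∧ ∀ s ∈ S, ρ s ≤ t}

/-- The outer regularization `ρ⁺`. -/
noncomputable def sizePlus {E : Type*} [TopologicalSpace E] (ρ : Set E → ℝ≥0∞) (A : Set E) : ℝ≥0∞ :=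
  ⨅ (G : Set E) (_ : IsOpen G) (_ : A ⊆ G), ρ G

theorem stmt18 {E : Type*} [TopologicalSpace E] [LocallyCompactSpace E]
    (ρ : Set E → ℝ≥0∞) (hρ : IsSizeFunction ρ) (htotal : ∀ x : E, ρ {x} = 0)
    (hoc : ∀ K : Set E, IsCompact K → sizePlus ρ K = ρ K) :
    ∀ x : E, ∀ G : Set E, IsOpen G → x ∈ G →
      ∃ U : Set E, U ∈ nhds x ∧ U ⊆ G ∧ monk ρ U = 0 := by
  classical
  intro x G hG hxG
  obtain ⟨K, hKn, hKG, hKc⟩ := local_compact_nhds (hG.mem_nhds hxG)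
  refine ⟨K, hKn, hKG, ?_⟩
  -- for each point y, and each t>0, choose an open set containing y of size < t
  have key : ∀ t : ℝ≥0∞, 0 < t → ∀ y : E, ∃ V : Set E, IsOpen V ∧ y ∈ V ∧ ρ V ≤ t := by
    intro t ht y
    have h0 : sizePlus ρ {y} = 0 := by
      rw [hoc _ isCompact_singleton]; exact htotal y
    have hlt : sizePlus ρ {y} < t := by rw [h0]; exact ht
    simp only [sizePlus, iInf_lt_iff] at hlt
    obtain ⟨V, hV, hyV, hVt⟩ := hlt
    exact ⟨V, hV, by simpa using hyV, hVt.le⟩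
  have hmono : monk ρ K ≤ 0 := by
    refine ENNReal.le_of_forall_pos_le_add ?_
    intro e he _
    rw [zero_add]
    have ht : (0:ℝ≥0∞) < (e : ℝ≥0∞) := ENNReal.coe_pos.mpr he
    set t : ℝ≥0∞ := (e : ℝ≥0∞) with htdef
    choose V hVo hVmem hVle using key t ht
    obtain ⟨F, hFK, hFc⟩ := hKc.elim_nhds_subcover V (fun y _ => (hVo y).mem_nhds (hVmem y))
    rw [monk]
    refine sInf_le (show t ∈ {u : ℝ≥0∞ | 0 < u ∧ ∃ S : Finset (Set E), (K ⊆ ⋃ s ∈ S, s) ∧ ∀ s ∈ S, ρ s ≤ u} from ⟨ht, F.image V, ?_, ?_⟩)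
    · intro z hz
      obtain ⟨y, hyF, hzV⟩ := Set.mem_iUnion₂.mp (hFc hz)
      exact Set.mem_iUnion₂.mpr ⟨V y, Finset.mem_image_of_mem V hyF, hzV⟩
    · intro s hs
      obtain ⟨y, _, rfl⟩ := Finset.mem_image.mp hs
      exact hVle y
  exact le_antisymm hmono zero_le
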